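/- There exists an absolute constant C such that for all u ≥ 2, ∫_0^{u − u^{2/3}} e^{v·ξ(u)}·ρ(v) dv ≤ C·ρ̂(−ξ(u))·e^{−u^{1/3}/5}. -/

import Mathlib

open Real Filter

open scoped Classical

noncomputable section

/-- `ξ(t)`: for `t > 1`, the unique positive solution of `e^ξ = 1 + tξ`; `ξ(t) = 0` for `t ≤ 1`. -/
def xiF (t : ℝ) : ℝ :=
  if t ≤ 1 then 0 else Classical.epsilon fun s : ℝ => 0 < s ∧ Real.exp s = 1 + t * s

/-- The standard normal distribution function `Φ`. -/
def gaussPhi (h : ℝ) : ℝ := (Real.sqrt (2 * Real.pi))⁻¹ * ∫ t in Set.Iic h, Real.exp (-t ^ 2 / 2)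

/-- The defining properties of the Dickman function `ρ`: continuous on `[0, ∞)`, equal to `1`
on `[0, 1]`, differentiable on `(1, ∞)` where it satisfies `tρ'(t) + ρ(t-1) = 0`. -/
def IsDickman (ρ : ℝ → ℝ) : Prop :=
  ContinuousOn ρ (Set.Ici 0) ∧ (∀ t ∈ Set.Icc (0 : ℝ) 1, ρ t = 1) ∧
    (∀ t, 1 < t → DifferentiableAt ℝ ρ t) ∧ ∀ t, 1 < t → t * deriv ρ t + ρ (t - 1) = 0

/-- `ρ̂(-s) = ∫_0^∞ ρ(v) e^{vs} dv`. -/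
def rhoHat (ρ : ℝ → ℝ) (s : ℝ) : ℝ := ∫ v in Set.Ioi (0 : ℝ), ρ v * Real.exp (v * s)

namespace Aux17

open MeasureTheory Set

/-! ### Elementary inequalities -/

lemma exp_lt_one_add_two_mul {s : ℝ} (h0 : 0 < s) (h1 : s ≤ 1 / 2) :
    Real.exp s < 1 + 2 * s := by
  have h2 : 1 - s < Real.exp (-s) := by
    have := Real.add_one_lt_exp (x := -s) (by linarith)
    linarith
  have h3 : Real.exp s * (1 - s) < 1 := by
    calc Real.exp s * (1 - s) < Real.exp s * Real.exp (-s) :=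
          mul_lt_mul_of_pos_left h2 (Real.exp_pos s)
      _ = 1 := by rw [← Real.exp_add]; simp
  nlinarith [Real.exp_pos s, mul_nonneg h0.le (by linarith : (0:ℝ) ≤ 1 - 2 * s)]

lemma exp_sub_sq_le {x : ℝ} (h0 : 0 ≤ x) (h1 : x ≤ 1 / 2) :
    Real.exp (x - x ^ 2) ≤ 1 + x := by
  have h2 : 1 - (x - x ^ 2) ≤ Real.exp (-(x - x ^ 2)) := by
    linarith [Real.add_one_le_exp (-(x - x ^ 2))]
  have h5 : Real.exp (x - x ^ 2) * (1 - x + x ^ 2) ≤ 1 := by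
    calc Real.exp (x - x ^ 2) * (1 - x + x ^ 2)
        = Real.exp (x - x ^ 2) * (1 - (x - x ^ 2)) := by ring
      _ ≤ Real.exp (x - x ^ 2) * Real.exp (-(x - x ^ 2)) :=
          mul_le_mul_of_nonneg_left h2 (Real.exp_pos _).le
      _ = 1 := by rw [← Real.exp_add]; simp
  have h4 : 0 < 1 - x + x ^ 2 := by nlinarith
  nlinarith [Real.exp_pos (x - x ^ 2), mul_nonneg (mul_nonneg h0 h0) h0]

lemma xi_spec {u : ℝ} (hu : 2 ≤ u) :
    1 / 2 < xiF u ∧ Real.exp (xiF u) = 1 + u * xiF u := by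
  have hu1 : ¬u ≤ 1 := by linarith
  have hex : ∃ s : ℝ, 0 < s ∧ Real.exp s = 1 + u * s := by
    have hcont : ContinuousOn (fun s : ℝ => Real.exp s - (1 + u * s)) (Icc (1/2) (3*u)) := by
      fun_prop
    have h12 : (1:ℝ)/2 ≤ 3*u := by linarith
    have hneg : Real.exp (1/2) - (1 + u * (1/2)) < 0 := by
      have e1 : Real.exp (1/2) * Real.exp (1/2) = Real.exp 1 := by
        rw [← Real.exp_add]; norm_num
      have h4 : Real.exp (1/2) < 2 := by
        nlinarith [Real.exp_one_lt_d9, Real.exp_pos (1/2:ℝ)]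
      nlinarith
    have hposend : 0 < Real.exp (3*u) - (1 + u * (3*u)) := by
      have h5 : (1 + u) ^ 3 ≤ Real.exp u ^ 3 :=
        pow_le_pow_left₀ (by linarith) (by linarith [Real.add_one_le_exp u]) 3
      have h6 : Real.exp (3*u) = Real.exp u ^ 3 := by
        rw [← Real.exp_nat_mul]; norm_num
      have h7 : (1 + u) ^ 3 = 1 + 3*u + 3*u^2 + u^3 := by ring
      have h8 : 0 ≤ u^3 := pow_nonneg (by linarith) 3
      have h9 : u * (3 * u) = 3*u^2 := by ring
      linarith
    have h0mem : (0:ℝ) ∈ Icc (Real.exp (1/2) - (1 + u * (1/2))) (Real.exp (3*u) - (1 + u * (3*u))) :=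
      ⟨hneg.le, hposend.le⟩
    obtain ⟨s, hs, hfs⟩ := intermediate_value_Icc h12 hcont h0mem
    have hfs' : Real.exp s - (1 + u * s) = 0 := hfs
    exact ⟨s, by linarith [hs.1], by linarith⟩
  rw [xiF, if_neg hu1]
  have h := Classical.epsilon_spec hex
  refine ⟨?_, h.2⟩
  by_contra hle
  push_neg at hle
  have hlt := exp_lt_one_add_two_mul h.1 hle
  nlinarith [h.1, h.2]

/-! ### Basic facts about (the continuous extension of) the Dickman function -/

variable {D : ℝ → ℝ}

lemma prim_hasDerivAt (hc : Continuous D) (a t : ℝ) :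
    HasDerivAt (fun x => ∫ v in a..x, D v) (D t) t :=
  intervalIntegral.integral_hasDerivAt_right (hc.intervalIntegrable a t)
    ⟨univ, univ_mem, hc.aestronglyMeasurable.restrict⟩ hc.continuousAt

lemma prim_continuous (hc : Continuous D) (a : ℝ) :
    Continuous (fun x => ∫ v in a..x, D v) :=
  continuous_iff_continuousAt.2 fun t => (prim_hasDerivAt hc a t).continuousAt

lemma dick_ident (hc : Continuous D) (h1 : ∀ x ≤ (1:ℝ), D x = 1)
    (hd : ∀ t, 1 < t → HasDerivAt D (-D (t - 1) / t) t) :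
    ∀ t, 1 ≤ t → t * D t = ∫ x in (t - 1)..t, D x := by
  set G : ℝ → ℝ := fun t => t * D t - (∫ x in (0:ℝ)..t, D x) + ∫ x in (0:ℝ)..(t - 1), D x
    with hG
  have hGderiv : ∀ t, 1 < t → HasDerivAt G 0 t := by
    intro t ht
    have ht0 : t ≠ 0 := by linarith
    have h1d : HasDerivAt (fun x => x * D x) (1 * D t + t * (-D (t - 1) / t)) t :=
      (hasDerivAt_id t).mul (hd t ht)
    have h2d : HasDerivAt (fun x => ∫ v in (0:ℝ)..x, D v) (D t) t := prim_hasDerivAt hc 0 t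
    have h3d : HasDerivAt (fun x => ∫ v in (0:ℝ)..(x - 1), D v) (D (t - 1) * 1) t := by
      exact (prim_hasDerivAt hc 0 (t - 1)).comp t ((hasDerivAt_id t).sub_const 1)
    have hsum := (h1d.sub h2d).add h3d
    rw [hG]
    refine hsum.congr_deriv ?_
    field_simp
    ring
  have hGcont : Continuous G := by
    apply Continuous.add
    · exact (continuous_id.mul hc).sub (prim_continuous hc 0)
    · exact (prim_continuous hc 0).comp (continuous_id.sub continuous_const)
  have hG1 : G 1 = 0 := by
    have h01 : (∫ x in (0:ℝ)..1, D x) = 1 := by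
      rw [intervalIntegral.integral_congr (g := fun _ => (1:ℝ)) (fun x hx => by
        rw [Set.uIcc_of_le zero_le_one] at hx
        exact h1 x hx.2)]
      simp
    simp [hG, h01, h1 1 le_rfl]
  intro t ht
  have hGt : G t = 0 := by
    rcases eq_or_lt_of_le ht with h | ht1
    · rw [← h]; exact hG1
    · have hconst : ∀ s, 1 < s → s ≤ t → G t = G s := by
        intro s hs hst
        have := constant_of_has_deriv_right_zero (f := G) (a := s) (b := t)
          hGcont.continuousOn
          (fun x hx => ((hGderiv x (lt_of_lt_of_le hs hx.1)).hasDerivWithinAt))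
        exact this t (right_mem_Icc.2 hst)
      have h2 : Tendsto G (nhdsWithin (1:ℝ) (Ioi 1)) (nhds (G 1)) :=
        (hGcont.tendsto 1).mono_left nhdsWithin_le_nhds
      have h3 : ∀ᶠ s in nhdsWithin (1:ℝ) (Ioi 1), G s = G t := by
        filter_upwards [Ioo_mem_nhdsGT_of_mem (left_mem_Ico.2 ht1)] with s hs
        exact (hconst s hs.1 hs.2.le).symm
      have h4 : Tendsto G (nhdsWithin (1:ℝ) (Ioi 1)) (nhds (G t)) :=
        tendsto_const_nhds.congr' (by filter_upwards [h3] with s hs using hs.symm)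
      rw [tendsto_nhds_unique h4 h2, hG1]
  have hadj := intervalIntegral.integral_add_adjacent_intervals (μ := MeasureTheory.volume)
    (hc.intervalIntegrable 0 (t - 1)) (hc.intervalIntegrable (t - 1) t)
  have hGt' : (t * D t - ∫ x in (0:ℝ)..t, D x) + ∫ x in (0:ℝ)..(t - 1), D x = 0 := hGt
  linarith
lemma dick_pos (hc : Continuous D) (h1 : ∀ x ≤ (1:ℝ), D x = 1)
    (hd : ∀ t, 1 < t → HasDerivAt D (-D (t - 1) / t) t) :
    ∀ x, 0 < D x := by
  by_contra hcon
  push_neg at hcon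
  obtain ⟨x0, hx0⟩ := hcon
  have hx01 : 1 < x0 := by
    by_contra h
    push_neg at h
    rw [h1 x0 h] at hx0; linarith
  set S := {t : ℝ | 1 ≤ t ∧ D t ≤ 0} with hS
  have hSclosed : IsClosed S := by
    have : S = Ici 1 ∩ D ⁻¹' (Iic 0) := rfl
    rw [this]
    exact isClosed_Ici.inter (isClosed_Iic.preimage hc)
  have hne : S.Nonempty := ⟨x0, hx01.le, hx0⟩
  have hbdd : BddBelow S := ⟨1, fun t ht => ht.1⟩
  set t0 := sInf S with ht0
  have ht0S : t0 ∈ S := hSclosed.csInf_mem hne hbdd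
  have ht0gt : 1 < t0 := by
    rcases eq_or_lt_of_le ht0S.1 with h | h
    · exfalso
      have h2 := h1 1 le_rfl
      rw [h] at h2
      linarith [ht0S.2]
    · exact h
  have hlt : ∀ x, x < t0 → 0 < D x := by
    intro x hx
    by_cases hx1 : x ≤ 1
    · rw [h1 x hx1]; norm_num
    · push_neg at hx1
      by_contra hDx
      push_neg at hDx
      exact absurd (csInf_le hbdd ⟨hx1.le, hDx⟩) (not_le.2 hx)
  have hint : 0 < ∫ x in (t0 - 1)..t0, D x :=
    intervalIntegral.intervalIntegral_pos_of_pos_on (hc.intervalIntegrable _ _)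
      (fun x hx => hlt x hx.2) (by linarith)
  have hident := dick_ident hc h1 hd t0 (by linarith)
  nlinarith [ht0S.2, ht0gt]

lemma dick_anti (hc : Continuous D) (h1 : ∀ x ≤ (1:ℝ), D x = 1)
    (hd : ∀ t, 1 < t → HasDerivAt D (-D (t - 1) / t) t) :
    Antitone D := by
  have hpos := dick_pos hc h1 hd
  have hanti : AntitoneOn D (Ici 1) := by
    apply antitoneOn_of_deriv_nonpos (convex_Ici 1) hc.continuousOn
    · intro x hx
      rw [interior_Ici] at hx
      exact (hd x hx).differentiableAt.differentiableWithinAt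
    · intro x hx
      rw [interior_Ici] at hx
      rw [(hd x hx).deriv]
      have hx0 : (0:ℝ) < x := lt_trans zero_lt_one hx
      exact div_nonpos_of_nonpos_of_nonneg (by linarith [hpos (x - 1)]) hx0.le
  intro x y hxy
  by_cases hy : y ≤ 1
  · rw [h1 x (le_trans hxy hy), h1 y hy]
  · push_neg at hy
    by_cases hx : x ≤ 1
    · rw [h1 x hx]
      have h2 : D y ≤ D 1 := hanti (mem_Ici.2 le_rfl) (mem_Ici.2 hy.le) hy.le
      rw [h1 1 le_rfl] at h2
      exact h2
    · push_neg at hx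
      exact hanti (mem_Ici.2 hx.le) (mem_Ici.2 (le_trans hx.le hxy)) hxy

lemma dick_le_one (hc : Continuous D) (h1 : ∀ x ≤ (1:ℝ), D x = 1)
    (hd : ∀ t, 1 < t → HasDerivAt D (-D (t - 1) / t) t) :
    ∀ x, D x ≤ 1 := by
  intro x
  by_cases hx : x ≤ 1
  · rw [h1 x hx]
  · push_neg at hx
    have h2 := dick_anti hc h1 hd hx.le
    rwa [h1 1 le_rfl] at h2

lemma dick_decay (hc : Continuous D) (h1 : ∀ x ≤ (1:ℝ), D x = 1)
    (hd : ∀ t, 1 < t → HasDerivAt D (-D (t - 1) / t) t) {a : ℝ} (ha : 0 ≤ a) :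
    ∃ K : ℝ, 0 < K ∧ ∀ v : ℝ, D v ≤ K * Real.exp (-(a * v)) := by
  have hpos := dick_pos hc h1 hd
  have hanti := dick_anti hc h1 hd
  have hone := dick_le_one hc h1 hd
  set M : ℝ := Real.exp a + 2 with hM
  have hMexp : Real.exp a ≤ M := by rw [hM]; linarith
  have hM2 : (2:ℝ) ≤ M := by rw [hM]; linarith [Real.exp_pos a]
  have hstep : ∀ v : ℝ, 1 ≤ v → v * D v ≤ D (v - 1) := by
    intro v hv
    rw [dick_ident hc h1 hd v hv]
    calc (∫ x in (v-1)..v, D x) ≤ ∫ _x in (v-1)..v, D (v-1) :=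
          intervalIntegral.integral_mono_on (by linarith) (hc.intervalIntegrable _ _)
            intervalIntegrable_const (fun x hx => hanti hx.1)
      _ = D (v - 1) := by simp
  have hind : ∀ n : ℕ, ∀ v : ℝ, M + n ≤ v → v ≤ M + n + 1 → D v ≤ Real.exp (-(a * n)) := by
    intro n
    induction n with
    | zero => intro v _ _; simpa using hone v
    | succ k ih =>
      intro v hv1 hv2
      have hcast : ((k+1 : ℕ) : ℝ) = (k : ℝ) + 1 := by push_cast; ring
      rw [hcast] at hv1 hv2
      have hkn : (0:ℝ) ≤ (k:ℝ) := Nat.cast_nonneg k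
      have hva : (1:ℝ) ≤ v := by linarith
      have hv0 : (0:ℝ) < v := by linarith
      have h3 := hstep v hva
      have hprev : D (v - 1) ≤ Real.exp (-(a * k)) := ih (v-1) (by linarith) (by linarith)
      have hinv : Real.exp a ≤ v := by linarith
      have hDv : D v ≤ D (v - 1) / v := by
        rw [le_div_iff₀ hv0]; linarith [h3]
      have hfin : D v ≤ Real.exp (-(a * k)) / Real.exp a := by
        calc D v ≤ D (v-1) / v := hDv
          _ ≤ Real.exp (-(a * k)) / v := by gcongr
          _ ≤ Real.exp (-(a * k)) / Real.exp a := by gcongr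
      calc D v ≤ Real.exp (-(a * k)) / Real.exp a := hfin
        _ = Real.exp (-(a * ((k:ℝ)+1))) := by rw [← Real.exp_sub]; ring_nf
        _ = Real.exp (-(a * ((k+1:ℕ):ℝ))) := by rw [hcast]
  refine ⟨Real.exp (a * (M + 1)), Real.exp_pos _, fun v => ?_⟩
  by_cases hvM : v ≤ M + 1
  · calc D v ≤ 1 := hone v
      _ ≤ Real.exp (a*(M+1)) * Real.exp (-(a*v)) := by
          rw [← Real.exp_add]
          apply Real.one_le_exp
          nlinarith [mul_nonneg ha (by linarith : (0:ℝ) ≤ M + 1 - v)]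
  · push_neg at hvM
    set n := Nat.floor (v - M) with hn
    have hge : (0:ℝ) ≤ v - M := by linarith
    have h0 : (n:ℝ) ≤ v - M := Nat.floor_le hge
    have h1' : v - M < n + 1 := Nat.lt_floor_add_one _
    have := hind n v (by linarith) (by linarith)
    calc D v ≤ Real.exp (-(a * n)) := this
      _ ≤ Real.exp (a * (M + 1)) * Real.exp (-(a * v)) := by
          rw [← Real.exp_add]
          apply Real.exp_le_exp.2
          nlinarith [mul_nonneg ha (by linarith : (0:ℝ) ≤ (n:ℝ) + 1 - (v - M))]

lemma dick_integrable (hc : Continuous D) (h1 : ∀ x ≤ (1:ℝ), D x = 1)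
    (hd : ∀ t, 1 < t → HasDerivAt D (-D (t - 1) / t) t) (c : ℝ) :
    IntegrableOn (fun v => Real.exp (c * v) * D v) (Ioi (0:ℝ)) := by
  have hpos := dick_pos hc h1 hd
  obtain ⟨K, hK, hbound⟩ := dick_decay hc h1 hd (a := |c| + 1) (by positivity)
  have hg : IntegrableOn (fun v => K * Real.exp (-1 * v)) (Ioi (0:ℝ)) :=
    (exp_neg_integrableOn_Ioi 0 one_pos).const_mul K
  apply Integrable.mono' hg
  · exact ((Real.continuous_exp.comp (continuous_const.mul continuous_id)).mul hc).aestronglyMeasurable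
  · filter_upwards [ae_restrict_mem measurableSet_Ioi] with v hv
    have hDv := hpos v
    rw [Real.norm_eq_abs, abs_of_nonneg (by positivity)]
    calc Real.exp (c*v) * D v ≤ Real.exp (c*v) * (K * Real.exp (-((|c|+1) * v))) :=
          mul_le_mul_of_nonneg_left (hbound v) (Real.exp_pos _).le
      _ = K * Real.exp (c*v + -((|c|+1)*v)) := by rw [Real.exp_add]; ring
      _ ≤ K * Real.exp (-1 * v) := by
          apply mul_le_mul_of_nonneg_left _ hK.le
          apply Real.exp_le_exp.2
          nlinarith [mul_nonneg (sub_nonneg.2 (le_abs_self c)) (le_of_lt hv)]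

lemma dick_integrable_id (hc : Continuous D) (h1 : ∀ x ≤ (1:ℝ), D x = 1)
    (hd : ∀ t, 1 < t → HasDerivAt D (-D (t - 1) / t) t) (c : ℝ) :
    IntegrableOn (fun v => v * (Real.exp (c * v) * D v)) (Ioi (0:ℝ)) := by
  have hpos := dick_pos hc h1 hd
  obtain ⟨K, hK, hbound⟩ := dick_decay hc h1 hd (a := |c| + 2) (by positivity)
  have hg : IntegrableOn (fun v => K * Real.exp (-1 * v)) (Ioi (0:ℝ)) :=
    (exp_neg_integrableOn_Ioi 0 one_pos).const_mul K
  apply Integrable.mono' hg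
  · exact (continuous_id.mul
      ((Real.continuous_exp.comp (continuous_const.mul continuous_id)).mul hc)).aestronglyMeasurable
  · filter_upwards [ae_restrict_mem measurableSet_Ioi] with v hv
    have hv0 : (0:ℝ) < v := hv
    have hDv := hpos v
    rw [Real.norm_eq_abs, abs_of_nonneg (by positivity)]
    have hvexp : v ≤ Real.exp v := by linarith [Real.add_one_le_exp v]
    calc v * (Real.exp (c*v) * D v) ≤ v * (Real.exp (c*v) * (K * Real.exp (-((|c|+2) * v)))) := by
          apply mul_le_mul_of_nonneg_left _ hv0.le
          exact mul_le_mul_of_nonneg_left (hbound v) (Real.exp_pos _).le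
      _ ≤ Real.exp v * (Real.exp (c*v) * (K * Real.exp (-((|c|+2) * v)))) := by
          apply mul_le_mul_of_nonneg_right hvexp
          positivity
      _ = K * Real.exp (v + c*v + -((|c|+2)*v)) := by rw [Real.exp_add, Real.exp_add]; ring
      _ ≤ K * Real.exp (-1 * v) := by
          apply mul_le_mul_of_nonneg_left _ hK.le
          apply Real.exp_le_exp.2
          nlinarith [mul_nonneg (sub_nonneg.2 (le_abs_self c)) hv0.le]

/-! ### Auxiliary integral computations -/

lemma integral_shift_Ioi (f : ℝ → ℝ) (a w : ℝ) :
    (∫ v in Ioi a, f v) = ∫ x in Ioi (a - w), f (x + w) := by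
  rw [← integral_indicator measurableSet_Ioi, ← integral_indicator measurableSet_Ioi]
  have h : ((Ioi (a-w)).indicator (fun y => f (y + w))) = fun x => (Ioi a).indicator f (x + w) := by
    funext x
    by_cases hx : a - w < x
    · rw [indicator_of_mem (mem_Ioi.2 hx), indicator_of_mem (mem_Ioi.2 (by linarith))]
    · rw [indicator_of_notMem (fun hh => hx (mem_Ioi.1 hh)),
        indicator_of_notMem (fun hh => hx (by have := mem_Ioi.1 hh; linarith))]
  rw [h]
  exact (integral_add_right_eq_self ((Ioi a).indicator f) w).symm

lemma integral_exp_Ioc {c : ℝ} (hcne : c ≠ 0) {b : ℝ} (hb : 0 ≤ b) :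
    (∫ x in Ioc (0:ℝ) b, Real.exp (c * x)) = (Real.exp (c * b) - 1) / c := by
  rw [← intervalIntegral.integral_of_le hb]
  have hder : ∀ x ∈ Set.uIcc (0:ℝ) b, HasDerivAt (fun y => Real.exp (c * y) / c)
      (Real.exp (c * x)) x := by
    intro x _
    have hl : HasDerivAt (fun y : ℝ => c * y) (c * 1) x := HasDerivAt.const_mul c (hasDerivAt_id x)
    have h := ((Real.hasDerivAt_exp (c * x)).comp x hl).div_const c
    refine h.congr_deriv ?_
    field_simp
  rw [intervalIntegral.integral_eq_sub_of_hasDerivAt hder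
    ((Real.continuous_exp.comp (continuous_const.mul continuous_id)).intervalIntegrable 0 b)]
  rw [mul_zero, Real.exp_zero]
  ring

lemma integral_id_exp {c : ℝ} (hcne : c ≠ 0) :
    (∫ x in Ioc (0:ℝ) 1, x * Real.exp (c * x)) = ((c - 1) * Real.exp c + 1) / c ^ 2 := by
  rw [← intervalIntegral.integral_of_le zero_le_one]
  have hder : ∀ x ∈ Set.uIcc (0:ℝ) 1, HasDerivAt (fun y => (c * y - 1) / c ^ 2 * Real.exp (c * y))
      (x * Real.exp (c * x)) x := by
    intro x _
    have hl : HasDerivAt (fun y : ℝ => c * y) (c * 1) x := HasDerivAt.const_mul c (hasDerivAt_id x)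
    have hlin : HasDerivAt (fun y : ℝ => (c * y - 1) / c ^ 2) (c * 1 / c ^ 2) x :=
      (hl.sub_const 1).div_const (c ^ 2)
    have hexp : HasDerivAt (fun y : ℝ => Real.exp (c * y)) (Real.exp (c * x) * (c * 1)) x :=
      (Real.hasDerivAt_exp (c * x)).comp x hl
    have h := hlin.mul hexp
    refine h.congr_deriv ?_
    field_simp
    ring
  rw [intervalIntegral.integral_eq_sub_of_hasDerivAt hder
    ((continuous_id.mul (Real.continuous_exp.comp (continuous_const.mul continuous_id))).intervalIntegrable 0 1)]
  rw [mul_zero, Real.exp_zero, mul_one]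
  field_simp
  ring

/-! ### The key identity `∫ v e^{cv} D = ((e^c - 1)/c) ∫ e^{cv} D` -/

lemma dick_key (hc : Continuous D) (h1 : ∀ x ≤ (1:ℝ), D x = 1)
    (hd : ∀ t, 1 < t → HasDerivAt D (-D (t - 1) / t) t) {c : ℝ} (hcpos : 0 < c) :
    (∫ v in Ioi (0:ℝ), v * (Real.exp (c * v) * D v))
      = (Real.exp c - 1) / c * ∫ v in Ioi (0:ℝ), Real.exp (c * v) * D v := by
  have hcne : c ≠ 0 := ne_of_gt hcpos
  have hpos := dick_pos hc h1 hd
  have hint := dick_integrable hc h1 hd c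
  have hintv := dick_integrable_id hc h1 hd c
  set L : ℝ := ∫ v in Ioi (0:ℝ), Real.exp (c * v) * D v with hL
  have hsplit : Ioc (0:ℝ) 1 ∪ Ioi (1:ℝ) = Ioi (0:ℝ) := Ioc_union_Ioi_eq_Ioi zero_le_one
  have hdisj : Disjoint (Ioc (0:ℝ) 1) (Ioi (1:ℝ)) := by
    rw [Set.disjoint_left]
    intro x hx1 hx2
    exact absurd (mem_Ioi.1 hx2) (not_lt.2 hx1.2)
  have e0 : (∫ v in Ioi (0:ℝ), v * (Real.exp (c * v) * D v))
      = (∫ v in Ioc (0:ℝ) 1, v * (Real.exp (c * v) * D v))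
        + ∫ v in Ioi (1:ℝ), v * (Real.exp (c * v) * D v) := by
    rw [← hsplit]
    exact setIntegral_union hdisj measurableSet_Ioi
      (hintv.mono_set (by rw [← hsplit]; exact subset_union_left))
      (hintv.mono_set (by rw [← hsplit]; exact subset_union_right))
  have e1 : (∫ v in Ioc (0:ℝ) 1, v * (Real.exp (c * v) * D v))
      = ((c - 1) * Real.exp c + 1) / c ^ 2 := by
    have heq : EqOn (fun v => v * (Real.exp (c * v) * D v))
        (fun v => v * Real.exp (c * v)) (Ioc (0:ℝ) 1) := by
      intro v hv
      simp only
      rw [h1 v hv.2, mul_one]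
    rw [setIntegral_congr_fun measurableSet_Ioc heq, integral_id_exp hcne]
  have e2 : EqOn (fun v => v * (Real.exp (c * v) * D v))
      (fun v => ∫ w in Ioc (0:ℝ) 1, Real.exp (c * v) * D (v - w)) (Ioi (1:ℝ)) := by
    intro v hv
    simp only
    have hv1 : (1:ℝ) ≤ v := le_of_lt hv
    have hident := dick_ident hc h1 hd v hv1
    have hcomp : (∫ w in (0:ℝ)..1, D (v - w)) = ∫ x in (v-1)..v, D x := by
      rw [intervalIntegral.integral_comp_sub_left D v]
      norm_num
    calc v * (Real.exp (c * v) * D v) = Real.exp (c * v) * (v * D v) := by ring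
      _ = Real.exp (c * v) * ∫ w in (0:ℝ)..1, D (v - w) := by rw [hident, hcomp]
      _ = Real.exp (c * v) * ∫ w in Ioc (0:ℝ) 1, D (v - w) := by
          rw [intervalIntegral.integral_of_le zero_le_one]
      _ = ∫ w in Ioc (0:ℝ) 1, Real.exp (c * v) * D (v - w) := (integral_const_mul _ _).symm
  obtain ⟨K, hK, hbound⟩ := dick_decay hc h1 hd (a := c + 1) (by positivity)
  have hprod : Integrable (Function.uncurry fun v w => Real.exp (c * v) * D (v - w))
      ((volume.restrict (Ioi (1:ℝ))).prod (volume.restrict (Ioc (0:ℝ) 1))) := by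
    have hgint : Integrable (fun v => (K * Real.exp (c + 1)) * Real.exp (-1 * v))
        (volume.restrict (Ioi (1:ℝ))) := (exp_neg_integrableOn_Ioi 1 one_pos).const_mul _
    haveI hfin : IsFiniteMeasure (volume.restrict (Ioc (0:ℝ) 1)) := by
      constructor
      rw [Measure.restrict_apply_univ, Real.volume_Ioc]
      exact ENNReal.ofReal_lt_top
    have honeint : Integrable (fun _ : ℝ => (1:ℝ)) (volume.restrict (Ioc (0:ℝ) 1)) :=
      integrable_const 1
    have hgprod := hgint.mul_prod honeint
    apply Integrable.mono' hgprod
    · apply Continuous.aestronglyMeasurable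
      exact (Real.continuous_exp.comp (continuous_const.mul continuous_fst)).mul
        (hc.comp (continuous_fst.sub continuous_snd))
    · have hae : ∀ᵐ z : ℝ × ℝ
          ∂((volume.restrict (Ioi (1:ℝ))).prod (volume.restrict (Ioc (0:ℝ) 1))),
          z ∈ (Ioi (1:ℝ)) ×ˢ (Ioc (0:ℝ) 1) := by
        rw [Measure.prod_restrict]
        exact ae_restrict_mem (measurableSet_Ioi.prod measurableSet_Ioc)
      filter_upwards [hae] with z hz
      rw [Set.mem_prod] at hz
      obtain ⟨hz1, hz2⟩ := hz
      have hD := (hpos (z.1 - z.2)).le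
      have hnn : (0:ℝ) ≤ Real.exp (c * z.1) * D (z.1 - z.2) :=
        mul_nonneg (Real.exp_pos _).le hD
      rw [Function.uncurry]
      rw [Real.norm_eq_abs, abs_of_nonneg hnn]
      calc Real.exp (c * z.1) * D (z.1 - z.2)
          ≤ Real.exp (c * z.1) * (K * Real.exp (-((c + 1) * (z.1 - z.2)))) :=
            mul_le_mul_of_nonneg_left (hbound _) (Real.exp_pos _).le
        _ = K * Real.exp (c * z.1 + -((c + 1) * (z.1 - z.2))) := by rw [Real.exp_add]; ring
        _ ≤ K * Real.exp (c + 1) * Real.exp (-1 * z.1) * 1 := by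
            rw [mul_one, mul_assoc, ← Real.exp_add]
            apply mul_le_mul_of_nonneg_left _ hK.le
            apply Real.exp_le_exp.2
            nlinarith [mul_nonneg (by positivity : (0:ℝ) ≤ c + 1)
              (by linarith [hz2.2] : (0:ℝ) ≤ 1 - z.2)]
  have e3 : (∫ v in Ioi (1:ℝ), ∫ w in Ioc (0:ℝ) 1, Real.exp (c * v) * D (v - w))
      = ∫ w in Ioc (0:ℝ) 1, ∫ v in Ioi (1:ℝ), Real.exp (c * v) * D (v - w) :=
    integral_integral_swap hprod
  have e4 : EqOn (fun w => ∫ v in Ioi (1:ℝ), Real.exp (c * v) * D (v - w))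
      (fun w => Real.exp (c * w) * (L - (Real.exp (c * (1 - w)) - 1) / c)) (Ioc (0:ℝ) 1) := by
    intro w hw
    simp only
    have hw1 : w ≤ 1 := hw.2
    have h1w : (0:ℝ) ≤ 1 - w := by linarith
    have hshift : (∫ v in Ioi (1:ℝ), Real.exp (c * v) * D (v - w))
        = ∫ x in Ioi (1 - w), Real.exp (c * (x + w)) * D x := by
      rw [integral_shift_Ioi (fun v => Real.exp (c * v) * D (v - w)) 1 w]
      apply setIntegral_congr_fun measurableSet_Ioi
      intro x _
      simp only
      rw [add_sub_cancel_right]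
    rw [hshift]
    have hexpand : ∀ x : ℝ, Real.exp (c * (x + w)) * D x
        = Real.exp (c * w) * (Real.exp (c * x) * D x) := by
      intro x
      rw [mul_add, Real.exp_add]
      ring
    simp_rw [hexpand]
    rw [integral_const_mul]
    congr 1
    have hsplit2 : Ioc (0:ℝ) (1 - w) ∪ Ioi (1 - w) = Ioi (0:ℝ) := Ioc_union_Ioi_eq_Ioi h1w
    have hdisj2 : Disjoint (Ioc (0:ℝ) (1 - w)) (Ioi (1 - w)) := by
      rw [Set.disjoint_left]
      intro x hx1 hx2
      exact absurd (mem_Ioi.1 hx2) (not_lt.2 hx1.2)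
    have hu : L = (∫ x in Ioc (0:ℝ) (1 - w), Real.exp (c * x) * D x)
        + ∫ x in Ioi (1 - w), Real.exp (c * x) * D x := by
      rw [hL, ← hsplit2]
      exact setIntegral_union hdisj2 measurableSet_Ioi
        (hint.mono_set (by rw [← hsplit2]; exact subset_union_left))
        (hint.mono_set (by rw [← hsplit2]; exact subset_union_right))
    have hval : (∫ x in Ioc (0:ℝ) (1 - w), Real.exp (c * x) * D x)
        = (Real.exp (c * (1 - w)) - 1) / c := by
      have heq2 : EqOn (fun x => Real.exp (c * x) * D x) (fun x => Real.exp (c * x))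
          (Ioc (0:ℝ) (1 - w)) := by
        intro x hx
        simp only
        rw [h1 x (by linarith [hx.2, hw.1] : x ≤ 1), mul_one]
      rw [setIntegral_congr_fun measurableSet_Ioc heq2]
      exact integral_exp_Ioc hcne h1w
    rw [hu, hval]
    ring
  have e5 : (∫ w in Ioc (0:ℝ) 1, Real.exp (c * w) * (L - (Real.exp (c * (1 - w)) - 1) / c))
      = (Real.exp c - 1) / c * L - ((c - 1) * Real.exp c + 1) / c ^ 2 := by
    have hexpand2 : ∀ w : ℝ, Real.exp (c * w) * (L - (Real.exp (c * (1 - w)) - 1) / c)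
        = L * Real.exp (c * w) - (1 / c) * (Real.exp c - Real.exp (c * w)) := by
      intro w
      have h9 : Real.exp (c * w) * Real.exp (c * (1 - w)) = Real.exp c := by
        rw [← Real.exp_add]
        ring_nf
      have h10 : Real.exp (c * w) * (L - (Real.exp (c * (1 - w)) - 1) / c)
          = L * Real.exp (c * w)
            - (1 / c) * (Real.exp (c * w) * Real.exp (c * (1 - w)) - Real.exp (c * w)) := by
        field_simp
      rw [h10, h9]
    simp_rw [hexpand2]
    have hInt1 : IntegrableOn (fun w => Real.exp (c * w)) (Ioc (0:ℝ) 1) := by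
      apply Continuous.integrableOn_Ioc
      exact Real.continuous_exp.comp (continuous_const.mul continuous_id)
    have hconst : IntegrableOn (fun _ : ℝ => Real.exp c) (Ioc (0:ℝ) 1) := by
      refine integrableOn_const ?_
      rw [Real.volume_Ioc]
      exact ENNReal.ofReal_ne_top
    have hI1 : (∫ w in Ioc (0:ℝ) 1, Real.exp (c * w)) = (Real.exp c - 1) / c := by
      have h := integral_exp_Ioc hcne (zero_le_one (α := ℝ))
      rw [mul_one] at h
      exact h
    have hI2 : (∫ _w in Ioc (0:ℝ) 1, Real.exp c) = Real.exp c := by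
      rw [setIntegral_const, Real.volume_real_Ioc]
      norm_num
    have hg2 : IntegrableOn (fun w => (1/c) * (Real.exp c - Real.exp (c * w))) (Ioc (0:ℝ) 1) :=
      (hconst.sub hInt1).const_mul (1/c)
    have hsub2 : (∫ w in Ioc (0:ℝ) 1, (Real.exp c - Real.exp (c * w)))
        = Real.exp c - (Real.exp c - 1)/c := by
      have h := integral_sub (f := fun _ : ℝ => Real.exp c) (g := fun w => Real.exp (c * w))
        hconst hInt1
      rw [h, hI2, hI1]
    have h := integral_sub (f := fun w => L * Real.exp (c * w))
      (g := fun w => (1/c) * (Real.exp c - Real.exp (c * w))) (hInt1.const_mul L) hg2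
    rw [h, integral_const_mul, integral_const_mul, hI1, hsub2]
    field_simp
    ring
  calc (∫ v in Ioi (0:ℝ), v * (Real.exp (c * v) * D v))
      = (∫ v in Ioc (0:ℝ) 1, v * (Real.exp (c * v) * D v))
        + ∫ v in Ioi (1:ℝ), v * (Real.exp (c * v) * D v) := e0
    _ = ((c - 1) * Real.exp c + 1) / c ^ 2
        + ∫ v in Ioi (1:ℝ), ∫ w in Ioc (0:ℝ) 1, Real.exp (c * v) * D (v - w) := by
        rw [e1, setIntegral_congr_fun measurableSet_Ioi e2]
    _ = ((c - 1) * Real.exp c + 1) / c ^ 2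
        + ∫ w in Ioc (0:ℝ) 1, ∫ v in Ioi (1:ℝ), Real.exp (c * v) * D (v - w) := by rw [e3]
    _ = ((c - 1) * Real.exp c + 1) / c ^ 2
        + ((Real.exp c - 1) / c * L - ((c - 1) * Real.exp c + 1) / c ^ 2) := by
        rw [setIntegral_congr_fun measurableSet_Ioc e4, e5]
    _ = (Real.exp c - 1) / c * L := by ring

/-! ### Iteration -/

lemma dick_step (hc : Continuous D) (h1 : ∀ x ≤ (1:ℝ), D x = 1)
    (hd : ∀ t, 1 < t → HasDerivAt D (-D (t - 1) / t) t) {c1 c2 β : ℝ}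
    (hc1 : 0 < c1) (h12 : c1 ≤ c2) (hβ0 : 0 ≤ β) (hβ : β ≤ (Real.exp c1 - 1) / c1) :
    (1 + (c2 - c1) * β) * (∫ v in Ioi (0:ℝ), Real.exp (c1 * v) * D v)
      ≤ ∫ v in Ioi (0:ℝ), Real.exp (c2 * v) * D v := by
  have hpos := dick_pos hc h1 hd
  have hI1 := dick_integrable hc h1 hd c1
  have hI2 := dick_integrable hc h1 hd c2
  have hIv := dick_integrable_id hc h1 hd c1
  have hL1 : 0 ≤ ∫ v in Ioi (0:ℝ), Real.exp (c1 * v) * D v :=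
    setIntegral_nonneg measurableSet_Ioi
      (fun v _ => mul_nonneg (Real.exp_pos _).le (hpos v).le)
  have hkey := dick_key hc h1 hd hc1
  have hmono : (∫ v in Ioi (0:ℝ), Real.exp (c1 * v) * D v)
      + (c2 - c1) * (∫ v in Ioi (0:ℝ), v * (Real.exp (c1 * v) * D v))
      ≤ ∫ v in Ioi (0:ℝ), Real.exp (c2 * v) * D v := by
    rw [← integral_const_mul, ← integral_add hI1 (hIv.const_mul _)]
    apply setIntegral_mono_on (hI1.add (hIv.const_mul _)) hI2 measurableSet_Ioi
    intro v hv
    have hv0 : (0:ℝ) < v := hv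
    have hD := (hpos v).le
    have hexp : Real.exp (c1 * v) * (1 + (c2 - c1) * v) ≤ Real.exp (c2 * v) := by
      have h5 : 1 + (c2 - c1) * v ≤ Real.exp ((c2 - c1) * v) := by
        linarith [Real.add_one_le_exp ((c2 - c1) * v)]
      calc Real.exp (c1 * v) * (1 + (c2 - c1) * v)
          ≤ Real.exp (c1 * v) * Real.exp ((c2 - c1) * v) :=
            mul_le_mul_of_nonneg_left h5 (Real.exp_pos _).le
        _ = Real.exp (c2 * v) := by rw [← Real.exp_add]; ring_nf
    simp only [Pi.add_apply]
    nlinarith [mul_le_mul_of_nonneg_right hexp hD]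
  have hBL : β * (∫ v in Ioi (0:ℝ), Real.exp (c1 * v) * D v)
      ≤ (∫ v in Ioi (0:ℝ), v * (Real.exp (c1 * v) * D v)) := by
    rw [hkey]
    exact mul_le_mul_of_nonneg_right hβ hL1
  calc (1 + (c2 - c1) * β) * (∫ v in Ioi (0:ℝ), Real.exp (c1 * v) * D v)
      = (∫ v in Ioi (0:ℝ), Real.exp (c1 * v) * D v)
        + (c2 - c1) * (β * ∫ v in Ioi (0:ℝ), Real.exp (c1 * v) * D v) := by ring
    _ ≤ (∫ v in Ioi (0:ℝ), Real.exp (c1 * v) * D v)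
        + (c2 - c1) * (∫ v in Ioi (0:ℝ), v * (Real.exp (c1 * v) * D v)) := by
        have h6 := mul_le_mul_of_nonneg_left hBL (by linarith : (0:ℝ) ≤ c2 - c1)
        linarith
    _ ≤ ∫ v in Ioi (0:ℝ), Real.exp (c2 * v) * D v := hmono

lemma dick_iter (hc : Continuous D) (h1 : ∀ x ≤ (1:ℝ), D x = 1)
    (hd : ∀ t, 1 < t → HasDerivAt D (-D (t - 1) / t) t) {a δ β : ℝ}
    (ha : 0 < a) (hδ : 0 ≤ δ) (hβ0 : 0 ≤ β) (n : ℕ)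
    (hβ : ∀ x, a ≤ x → x ≤ a + n * δ → β ≤ (Real.exp x - 1) / x) :
    (1 + δ * β) ^ n * (∫ v in Ioi (0:ℝ), Real.exp (a * v) * D v)
      ≤ ∫ v in Ioi (0:ℝ), Real.exp ((a + n * δ) * v) * D v := by
  induction n with
  | zero => simp
  | succ k ih =>
    have hcast : ((k + 1 : ℕ) : ℝ) = (k : ℝ) + 1 := by push_cast; ring
    have hkd : (0:ℝ) ≤ (k : ℝ) * δ := mul_nonneg (Nat.cast_nonneg k) hδ
    have hβ' : ∀ x, a ≤ x → x ≤ a + k * δ → β ≤ (Real.exp x - 1) / x := by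
      intro x hx1 hx2
      exact hβ x hx1 (by rw [hcast]; linarith)
    have hih := ih hβ'
    have hstep := dick_step hc h1 hd (c1 := a + k * δ) (c2 := a + (k + 1 : ℕ) * δ)
      (by linarith) (by rw [hcast]; linarith) hβ0
      (hβ' (a + k * δ) (by linarith) le_rfl)
    have hx0 : (0:ℝ) ≤ 1 + δ * β := by positivity
    calc (1 + δ * β) ^ (k + 1) * (∫ v in Ioi (0:ℝ), Real.exp (a * v) * D v)
        = (1 + δ * β) * ((1 + δ * β) ^ k * ∫ v in Ioi (0:ℝ), Real.exp (a * v) * D v) := by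
          ring
      _ ≤ (1 + δ * β) * ∫ v in Ioi (0:ℝ), Real.exp ((a + k * δ) * v) * D v :=
          mul_le_mul_of_nonneg_left hih hx0
      _ = (1 + ((a + (k + 1 : ℕ) * δ) - (a + k * δ)) * β)
            * ∫ v in Ioi (0:ℝ), Real.exp ((a + k * δ) * v) * D v := by
          rw [hcast]; ring_nf
      _ ≤ ∫ v in Ioi (0:ℝ), Real.exp ((a + (k + 1 : ℕ) * δ) * v) * D v := hstep

end Aux17

set_option maxHeartbeats 3000000 in
/-- There is an absolute constant `C` such that for all `u ≥ 2`,
`∫_0^{u - u^{2/3}} e^{v ξ(u)} ρ(v) dv ≤ C ρ̂(-ξ(u)) e^{-u^{1/3}/5}`. -/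
theorem truncated_integral_bound :
    ∃ C : ℝ, 0 < C ∧
      ∀ ρ : ℝ → ℝ, IsDickman ρ →
        ∀ u : ℝ, 2 ≤ u →
          (∫ v in (0 : ℝ)..(u - u ^ ((2 : ℝ) / 3)), Real.exp (v * xiF u) * ρ v) ≤
            C * rhoHat ρ (xiF u) * Real.exp (-u ^ ((1 : ℝ) / 3) / 5) := by
  classical
  refine ⟨Real.exp 2, Real.exp_pos 2, ?_⟩
  intro ρ hρ u hu
  obtain ⟨hρc, hρ1, hρd, hρode⟩ := hρ
  open Aux17 MeasureTheory Set in
  set D : ℝ → ℝ := fun x => ρ (max x 0) with hDdef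
  have hc : Continuous D :=
    hρc.comp_continuous (continuous_id.max continuous_const) (fun x => le_max_right x 0)
  have h1 : ∀ x ≤ (1:ℝ), D x = 1 := fun x hx =>
    hρ1 (max x 0) ⟨le_max_right x 0, max_le hx zero_le_one⟩
  have hd : ∀ t, 1 < t → HasDerivAt D (-D (t - 1) / t) t := by
    intro t ht
    have ht0 : (0:ℝ) < t := by linarith
    have heq : D =ᶠ[nhds t] ρ := by
      filter_upwards [IsOpen.mem_nhds isOpen_Ioi ht0] with x hx
      simp [hDdef, max_eq_left (le_of_lt (show (0:ℝ) < x from hx))]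
    have hval : deriv ρ t = -ρ (t - 1) / t := by
      have h2 := hρode t ht
      rw [eq_div_iff (by linarith : t ≠ 0)]
      linarith
    have hD1 : D (t - 1) = ρ (t - 1) := by
      simp [hDdef, max_eq_left (by linarith : (0:ℝ) ≤ t - 1)]
    rw [Filter.EventuallyEq.hasDerivAt_iff heq, hD1, ← hval]
    exact (hρd t ht).hasDerivAt
  obtain ⟨hξ2, hξeq⟩ := xi_spec hu
  set ξ := xiF u with hξdef
  have hξpos : (0:ℝ) < ξ := by linarith
  have hu0 : (0:ℝ) < u := by linarith
  set u13 := u ^ ((1:ℝ)/3) with hu13def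
  set u23 := u ^ ((2:ℝ)/3) with hu23def
  have hu13pos : 0 < u13 := Real.rpow_pos_of_pos hu0 _
  have hu23pos : 0 < u23 := Real.rpow_pos_of_pos hu0 _
  have h13 : u13 * u23 = u := by
    rw [hu13def, hu23def, ← Real.rpow_add hu0]
    norm_num
  have h1313 : u13 * u13 = u23 := by
    rw [hu13def, hu23def, ← Real.rpow_add hu0]
    norm_num
  have hu13ge : (5/4 : ℝ) ≤ u13 := by
    have h2u : (2:ℝ) ^ ((1:ℝ)/3) ≤ u13 := by
      rw [hu13def]
      exact Real.rpow_le_rpow (by norm_num) hu (by norm_num)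
    have h3 : ((5:ℝ)/4) ^ (3:ℕ) ≤ ((2:ℝ) ^ ((1:ℝ)/3)) ^ (3:ℕ) := by
      rw [← Real.rpow_natCast ((2:ℝ) ^ ((1:ℝ)/3)) 3, ← Real.rpow_mul (by norm_num)]
      norm_num
    have h4 : (5/4:ℝ) ≤ (2:ℝ) ^ ((1:ℝ)/3) :=
      le_of_pow_le_pow_left₀ (by norm_num) (by positivity) h3
    linarith
  set lam := u13⁻¹ / 2 with hlamdef
  have hlampos : 0 < lam := by positivity
  have hlam25 : lam ≤ 2/5 := by
    rw [hlamdef]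
    have h5 : u13⁻¹ ≤ (5/4:ℝ)⁻¹ := by
      apply inv_anti₀ (by norm_num) hu13ge
    rw [show ((5:ℝ)/4)⁻¹ = 4/5 by norm_num] at h5
    linarith
  have hlamlt : lam < ξ := by linarith
  have hcpos : 0 < ξ - lam := by linarith
  set β := u * (1 - lam) - 1 with hβdef
  have hβpos : 0 < β := by
    have h35 : (3:ℝ)/5 ≤ 1 - lam := by linarith
    have h6 : (2:ℝ) * (3/5) ≤ u * (1 - lam) :=
      mul_le_mul hu h35 (by norm_num) (by linarith)
    rw [hβdef]
    linarith
  have hβB : ∀ x, ξ - lam ≤ x → x ≤ ξ → β ≤ (Real.exp x - 1) / x := by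
    intro x hx1 hx2
    have hx0 : 0 < x := lt_of_lt_of_le hcpos hx1
    have hsub : Real.exp ξ * (1 - lam) ≤ Real.exp (ξ - lam) := by
      rw [Real.exp_sub, div_eq_mul_inv, ← Real.exp_neg]
      exact mul_le_mul_of_nonneg_left
        (by linarith [Real.add_one_le_exp (-lam)]) (Real.exp_pos ξ).le
    have hnum : (1 + u * ξ) * (1 - lam) - 1 ≤ Real.exp x - 1 := by
      have h6 : Real.exp (ξ - lam) ≤ Real.exp x := Real.exp_le_exp.2 hx1
      rw [← hξeq]
      linarith
    have hnum0 : 0 ≤ (1 + u * ξ) * (1 - lam) - 1 := by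
      have h35 : (3:ℝ)/5 ≤ 1 - lam := by linarith
      have h7 : (2:ℝ) * (1/2) ≤ u * ξ := mul_le_mul hu hξ2.le (by norm_num) (by linarith)
      have h8 : (2:ℝ) * (3/5) ≤ (1 + u * ξ) * (1 - lam) :=
        mul_le_mul (by linarith) h35 (by norm_num) (by linarith)
      linarith
    calc β ≤ ((1 + u * ξ) * (1 - lam) - 1) / ξ := by
          rw [le_div_iff₀ hξpos]
          have expand : (1 + u * ξ) * (1 - lam) - 1 - β * ξ = ξ - lam := by
            rw [hβdef]; ring
          linarith
      _ ≤ ((1 + u * ξ) * (1 - lam) - 1) / x := by gcongr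
      _ ≤ (Real.exp x - 1) / x := by gcongr
  set m := lam * β with hmdef
  have hm0 : 0 ≤ m := le_of_lt (mul_pos hlampos hβpos)
  set n : ℕ := Nat.ceil (m^2) + Nat.ceil (2*m) + 1 with hndef
  have hn0 : 0 < n := by rw [hndef]; omega
  have hnR : (0:ℝ) < (n:ℝ) := by exact_mod_cast hn0
  have hnm2 : m^2 ≤ (n:ℝ) := by
    calc m^2 ≤ (Nat.ceil (m^2) : ℝ) := Nat.le_ceil _
      _ ≤ (n:ℝ) := by
        have : Nat.ceil (m^2) ≤ n := by rw [hndef]; omega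
        exact_mod_cast this
  have hn2m : 2*m ≤ (n:ℝ) := by
    calc 2*m ≤ (Nat.ceil (2*m) : ℝ) := Nat.le_ceil _
      _ ≤ (n:ℝ) := by
        have : Nat.ceil (2*m) ≤ n := by rw [hndef]; omega
        exact_mod_cast this
  set δ := lam / n with hδdef
  have hδ0 : 0 ≤ δ := by positivity
  have hsum : (ξ - lam) + n * δ = ξ := by
    rw [hδdef]
    field_simp
    ring
  have hiter := dick_iter hc h1 hd hcpos hδ0 hβpos.le n
    (by rw [hsum]; exact hβB)
  rw [hsum] at hiter
  set x := δ * β with hxdef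
  have hxm : x = m / n := by rw [hxdef, hδdef, hmdef]; ring
  have hx0 : 0 ≤ x := mul_nonneg hδ0 hβpos.le
  have hx12 : x ≤ 1/2 := by
    rw [hxm, div_le_iff₀ hnR]
    linarith
  have hpow : Real.exp (m - 1) ≤ (1 + x)^n := by
    have h8 := exp_sub_sq_le hx0 hx12
    have h9 : Real.exp ((x - x^2) * n) ≤ (1 + x)^n := by
      rw [mul_comm, Real.exp_nat_mul]
      exact pow_le_pow_left₀ (Real.exp_pos _).le h8 n
    have h10 : m - 1 ≤ (x - x^2) * n := by
      have h11 : (m/n - (m/n)^2) * n = m - m^2/n := by field_simp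
      rw [hxm, h11]
      have h12 : m^2/n ≤ 1 := by rw [div_le_one hnR]; exact hnm2
      linarith
    calc Real.exp (m - 1) ≤ Real.exp ((x - x^2) * n) := Real.exp_le_exp.2 h10
      _ ≤ (1 + x)^n := h9
  have hLξ0 : 0 ≤ ∫ v in Ioi (0:ℝ), Real.exp (ξ * v) * D v :=
    setIntegral_nonneg measurableSet_Ioi
      (fun v _ => mul_nonneg (Real.exp_pos _).le (dick_pos hc h1 hd v).le)
  have hLc0 : 0 ≤ ∫ v in Ioi (0:ℝ), Real.exp ((ξ - lam) * v) * D v :=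
    setIntegral_nonneg measurableSet_Ioi
      (fun v _ => mul_nonneg (Real.exp_pos _).le (dick_pos hc h1 hd v).le)
  have hratio : (∫ v in Ioi (0:ℝ), Real.exp ((ξ - lam) * v) * D v)
      ≤ Real.exp (1 - m) * ∫ v in Ioi (0:ℝ), Real.exp (ξ * v) * D v := by
    have h11 : Real.exp (m - 1) * (∫ v in Ioi (0:ℝ), Real.exp ((ξ - lam) * v) * D v)
        ≤ ∫ v in Ioi (0:ℝ), Real.exp (ξ * v) * D v :=
      le_trans (mul_le_mul_of_nonneg_right hpow hLc0) hiter
    have h12 := mul_le_mul_of_nonneg_left h11 (Real.exp_pos (1 - m)).le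
    rw [← mul_assoc, ← Real.exp_add] at h12
    have h13 : (1 - m) + (m - 1) = 0 := by ring
    rw [h13, Real.exp_zero, one_mul] at h12
    exact h12
  set T := u - u23 with hTdef
  have hT0 : 0 < T := by
    have h14 : u23 < u := by
      have := Real.rpow_lt_rpow_of_exponent_lt (x := u) (by linarith)
        (show (2:ℝ)/3 < 1 by norm_num)
      rwa [Real.rpow_one] at this
    rw [hTdef]; linarith
  have hcongr : (∫ v in (0:ℝ)..T, Real.exp (v * ξ) * ρ v)
      = ∫ v in (0:ℝ)..T, Real.exp (v * ξ) * D v := by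
    apply intervalIntegral.integral_congr
    intro v hv
    rw [Set.uIcc_of_le hT0.le] at hv
    simp [hDdef, max_eq_left hv.1]
  have hchern : (∫ v in (0:ℝ)..T, Real.exp (v * ξ) * D v)
      ≤ Real.exp (lam * T) * ∫ v in Ioi (0:ℝ), Real.exp ((ξ - lam) * v) * D v := by
    rw [intervalIntegral.integral_of_le hT0.le]
    have hIξT : IntegrableOn (fun v => Real.exp (v * ξ) * D v) (Ioc (0:ℝ) T) := by
      have h15 : IntegrableOn (fun v => Real.exp (ξ * v) * D v) (Ioc (0:ℝ) T) :=
        (dick_integrable hc h1 hd ξ).mono_set Ioc_subset_Ioi_self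
      apply h15.congr_fun (fun v _ => by rw [mul_comm v ξ]) measurableSet_Ioc
    have hIcT : IntegrableOn (fun v => Real.exp (lam * T) * (Real.exp ((ξ - lam) * v) * D v))
        (Ioc (0:ℝ) T) :=
      ((dick_integrable hc h1 hd (ξ - lam)).mono_set Ioc_subset_Ioi_self).const_mul _
    calc (∫ v in Ioc (0:ℝ) T, Real.exp (v * ξ) * D v)
        ≤ ∫ v in Ioc (0:ℝ) T, Real.exp (lam * T) * (Real.exp ((ξ - lam) * v) * D v) := by
          apply setIntegral_mono_on hIξT hIcT measurableSet_Ioc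
          intro v hv
          have hvT : v ≤ T := hv.2
          have h16 : Real.exp (v * ξ) ≤ Real.exp (lam * T + (ξ - lam) * v) := by
            apply Real.exp_le_exp.2
            have h17 : lam * v ≤ lam * T := mul_le_mul_of_nonneg_left hvT hlampos.le
            nlinarith [h17]
          rw [Real.exp_add] at h16
          have := mul_le_mul_of_nonneg_right h16 (dick_pos hc h1 hd v).le
          linarith [this, mul_assoc (Real.exp (lam * T)) (Real.exp ((ξ - lam) * v)) (D v)]
      _ = Real.exp (lam * T) * ∫ v in Ioc (0:ℝ) T, Real.exp ((ξ - lam) * v) * D v :=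
          integral_const_mul _ _
      _ ≤ Real.exp (lam * T) * ∫ v in Ioi (0:ℝ), Real.exp ((ξ - lam) * v) * D v := by
          apply mul_le_mul_of_nonneg_left _ (Real.exp_pos _).le
          apply setIntegral_mono_set (dick_integrable hc h1 hd (ξ - lam))
          · filter_upwards [ae_restrict_mem measurableSet_Ioi] with v _
            exact mul_nonneg (Real.exp_pos _).le (dick_pos hc h1 hd v).le
          · exact HasSubset.Subset.eventuallyLE Ioc_subset_Ioi_self
  have hrho : rhoHat ρ ξ = ∫ v in Ioi (0:ℝ), Real.exp (ξ * v) * D v := by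
    rw [rhoHat]
    apply setIntegral_congr_fun measurableSet_Ioi
    intro v hv
    have hDv : D v = ρ v := by simp [hDdef, max_eq_left (le_of_lt (show (0:ℝ) < v from hv))]
    simp only [hDv, mul_comm ξ v]
    ring
  have e_lam_u : lam * u = u23 / 2 := by
    rw [hlamdef, ← h13]
    field_simp
  have e_lam_u23 : lam * u23 = u13 / 2 := by
    rw [hlamdef, ← h1313]
    field_simp
  have hexp_bound : lam * T + (1 - m) ≤ 2 - u13 / 5 := by
    have em : m = u23/2 - u13/4 - lam := by
      rw [hmdef, hβdef]
      linear_combination (1 - lam) * e_lam_u - (1/2) * e_lam_u23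
    have e_lam_T : lam * T = u23/2 - u13/2 := by
      rw [hTdef, mul_sub, e_lam_u, e_lam_u23]
    rw [e_lam_T, em]
    linarith [hlam25, hu13pos]
  calc (∫ v in (0:ℝ)..T, Real.exp (v * ξ) * ρ v)
      = ∫ v in (0:ℝ)..T, Real.exp (v * ξ) * D v := hcongr
    _ ≤ Real.exp (lam * T) * ∫ v in Ioi (0:ℝ), Real.exp ((ξ - lam) * v) * D v := hchern
    _ ≤ Real.exp (lam * T) * (Real.exp (1 - m) * ∫ v in Ioi (0:ℝ), Real.exp (ξ * v) * D v) :=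
        mul_le_mul_of_nonneg_left hratio (Real.exp_pos _).le
    _ = Real.exp (lam * T + (1 - m)) * ∫ v in Ioi (0:ℝ), Real.exp (ξ * v) * D v := by
        rw [← mul_assoc, ← Real.exp_add]
    _ ≤ Real.exp (2 - u13/5) * ∫ v in Ioi (0:ℝ), Real.exp (ξ * v) * D v :=
        mul_le_mul_of_nonneg_right (Real.exp_le_exp.2 hexp_bound) hLξ0
    _ = Real.exp 2 * rhoHat ρ ξ * Real.exp (-u13 / 5) := by
        rw [hrho, show (2:ℝ) - u13/5 = 2 + (-u13/5) by ring, Real.exp_add]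
        ring

end
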